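/- Let λ > 1, q ∈ ℕ with q ≥ 1, s > 0, and define E_i, U^{(κ)}, Q^κ and f as follows: E_i = {(x,y) : λ^{2iq}x² + λ^{−2iq}y² ≤ s²}, U^{(κ)} = ∩_{i=0}^{κ}E_i, Q^κ = U^{(κ)} \ E_{κ+1}, f(t) = arcsin(λ^t/√(1+λ^{2t})) − arcsin(1/√(1+λ^{2t})). Then for every κ ≥ 1, (Leb₂(Q^{κ−1}) − Leb₂(Q^κ))/Leb₂(Q^0) = (2·f(κq) − f((κ−1)q) − f((κ+1)q))/f(q). (This is the multiplicity distribution π(κ) of the limiting compound Poisson process for the Euclidean metric.) -/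

import Mathlib

open MeasureTheory Filter Topology Set

noncomputable section

/-- The ellipse region `E_i = {(x,y) : λ^{2iq}x² + λ^{-2iq}y² ≤ s²}`. -/
def ellipseSet (lam s : ℝ) (q i : ℕ) : Set (ℝ × ℝ) :=
  {p | lam ^ (2 * i * q) * p.1 ^ 2 + (lam ^ (2 * i * q))⁻¹ * p.2 ^ 2 ≤ s ^ 2}

/-- `U^{(κ)} = ⋂_{i=0}^{κ} E_i`. -/
def Uset (lam s : ℝ) (q κ : ℕ) : Set (ℝ × ℝ) :=
  ⋂ i ≤ κ, ellipseSet lam s q i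

/-- `Q^κ = U^{(κ)} \ E_{κ+1}`. -/
def Qset (lam s : ℝ) (q κ : ℕ) : Set (ℝ × ℝ) :=
  Uset lam s q κ \ ellipseSet lam s q (κ + 1)

/-- `f(t) = arcsin(λ^t/√(1+λ^{2t})) − arcsin(1/√(1+λ^{2t}))`. -/
def fArc (lam : ℝ) (t : ℕ) : ℝ :=
  Real.arcsin (lam ^ t / Real.sqrt (1 + lam ^ (2 * t))) -
    Real.arcsin (1 / Real.sqrt (1 + lam ^ (2 * t)))

def Farc (r x : ℝ) : ℝ := (r^2 * Real.arcsin (x/r) + x * Real.sqrt (r^2 - x^2))/2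

lemma hasDerivAt_Farc (r : ℝ) (hr : 0 < r) {x : ℝ} (h1 : -r < x) (h2 : x < r) :
    HasDerivAt (Farc r) (Real.sqrt (r^2 - x^2)) x := by
  have hx2 : 0 < r^2 - x^2 := by nlinarith
  have hsq : Real.sqrt (r^2 - x^2) > 0 := Real.sqrt_pos.2 hx2
  have hd1 : HasDerivAt (fun x : ℝ => Real.arcsin (x/r)) (1 / Real.sqrt (1 - (x/r)^2) * (1/r)) x := by
    have := (Real.hasDerivAt_arcsin
      (by intro h; rw [div_eq_iff hr.ne'] at h; simp only [id] at h; nlinarith)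
      (by intro h; rw [div_eq_iff hr.ne'] at h; simp only [id] at h; nlinarith)).comp x ((hasDerivAt_id x).div_const r)
    exact this.congr_deriv (by simp)
  have hd2 : HasDerivAt (fun x : ℝ => Real.sqrt (r^2 - x^2)) (1/(2 * Real.sqrt (r^2 - x^2)) * (-(2*x))) x := by
    have := (Real.hasDerivAt_sqrt hx2.ne').comp x (((hasDerivAt_id x).pow 2).const_sub (r^2))
    exact this.congr_deriv (by simp)
  have key : Real.sqrt (1 - (x/r)^2) = Real.sqrt (r^2 - x^2) / r := by
    rw [show 1 - (x/r)^2 = (r^2-x^2)/r^2 by field_simp,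
      Real.sqrt_div hx2.le, Real.sqrt_sq hr.le]
  have h := ((hd1.const_mul (r^2)).add ((hasDerivAt_id x).mul hd2)).div_const 2
  have hw : Real.sqrt (r^2-x^2) ^ 2 = r^2 - x^2 := Real.sq_sqrt hx2.le
  refine h.congr_deriv (Eq.symm ?_)
  rw [key]
  field_simp
  simp only [id]
  linear_combination hw

lemma continuous_Farc (r : ℝ) : Continuous (Farc r) := by
  unfold Farc
  have h1 : Continuous fun x : ℝ => Real.arcsin (x/r) :=
    Real.continuous_arcsin.comp (continuous_id.div_const r)
  have h2 : Continuous fun x : ℝ => Real.sqrt (r^2 - x^2) :=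
    Real.continuous_sqrt.comp (by fun_prop)
  fun_prop

lemma ftc_circ (r : ℝ) (hr : 0 < r) {a b : ℝ} (ha : -r ≤ a) (hab : a ≤ b) (hb : b ≤ r) :
    ∫ x in a..b, Real.sqrt (r^2 - x^2) = Farc r b - Farc r a := by
  apply intervalIntegral.integral_eq_sub_of_hasDeriv_right_of_le hab
    ((continuous_Farc r).continuousOn)
  · intro x hx
    exact (hasDerivAt_Farc r hr (lt_of_le_of_lt ha hx.1) (lt_of_lt_of_le hx.2 hb)).hasDerivWithinAt
  · exact (Real.continuous_sqrt.comp (by fun_prop)).intervalIntegrable a b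

def hfun (s c x : ℝ) : ℝ := min (Real.sqrt (s^2 - x^2)) (c * Real.sqrt (s^2 - c^2*x^2))

lemma slice_volume (s c : ℝ) (hc : 1 ≤ c) (x : ℝ) :
    volume {y : ℝ | x^2 + y^2 ≤ s^2 ∧ c^2*x^2 + (c^2)⁻¹*y^2 ≤ s^2}
      = ENNReal.ofReal (2 * hfun s c x) := by
  have hc0 : (0:ℝ) < c := lt_of_lt_of_le one_pos hc
  have hrw : {y : ℝ | x^2 + y^2 ≤ s^2 ∧ c^2*x^2 + (c^2)⁻¹*y^2 ≤ s^2}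
      = {y : ℝ | y^2 ≤ s^2 - x^2 ∧ y^2 ≤ c^2*(s^2 - c^2*x^2)} := by
    ext y
    simp only [mem_setOf_eq]
    constructor
    · rintro ⟨h1, h2⟩
      constructor
      · linarith
      · have := mul_le_mul_of_nonneg_left h2 (le_of_lt (by positivity : (0:ℝ) < c^2))
        have hcc : c^2 * ((c^2)⁻¹ * y^2) = y^2 := by field_simp
        nlinarith
    · rintro ⟨h1, h2⟩
      refine ⟨by linarith, ?_⟩
      have : (c^2)⁻¹ * y^2 ≤ s^2 - c^2*x^2 := by
        rw [inv_mul_le_iff₀ (by positivity : (0:ℝ) < c^2)]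
        linarith [h2]
      linarith
  rw [hrw]
  by_cases hneg : s^2 - c^2*x^2 < 0
  · have hempty : {y : ℝ | y^2 ≤ s^2 - x^2 ∧ y^2 ≤ c^2*(s^2 - c^2*x^2)} = ∅ := by
      ext y; simp only [mem_setOf_eq, mem_empty_iff_false, iff_false, not_and]
      intro _
      nlinarith [sq_nonneg y]
    have hh : hfun s c x = 0 := by
      unfold hfun
      rw [show Real.sqrt (s^2 - c^2*x^2) = 0 from Real.sqrt_eq_zero_of_nonpos (by linarith),
        mul_zero]
      exact min_eq_right (Real.sqrt_nonneg _)
    rw [hempty, hh]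
    simp
  · push_neg at hneg
    have hx1 : (0:ℝ) ≤ s^2 - x^2 := by nlinarith [mul_nonneg (by nlinarith : (0:ℝ) ≤ c^2-1) (sq_nonneg x)]
    have hmin : {y : ℝ | y^2 ≤ s^2 - x^2 ∧ y^2 ≤ c^2*(s^2 - c^2*x^2)}
        = Icc (-(hfun s c x)) (hfun s c x) := by
      have hm2 : (0:ℝ) ≤ c^2*(s^2 - c^2*x^2) := by positivity
      have hs2 : Real.sqrt (c^2*(s^2 - c^2*x^2)) = c * Real.sqrt (s^2 - c^2*x^2) := by
        rw [Real.sqrt_mul (by positivity), Real.sqrt_sq hc0.le]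
      ext y
      simp only [mem_setOf_eq, mem_Icc, Real.sq_le hx1, Real.sq_le hm2, hs2, hfun,
        neg_le, le_min_iff]
      tauto
    rw [hmin, Real.volume_Icc]
    congr 1
    ring

lemma hfun_nonneg (s c x : ℝ) (hc : 0 ≤ c) : 0 ≤ hfun s c x :=
  le_min (Real.sqrt_nonneg _) (mul_nonneg hc (Real.sqrt_nonneg _))

lemma continuous_hfun (s c : ℝ) : Continuous (hfun s c) := by
  unfold hfun
  have h1 : Continuous fun x : ℝ => Real.sqrt (s^2 - x^2) :=
    Real.continuous_sqrt.comp (by fun_prop)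
  have h2 : Continuous fun x : ℝ => Real.sqrt (s^2 - c^2*x^2) :=
    Real.continuous_sqrt.comp (by fun_prop)
  exact h1.min (continuous_const.mul h2)

lemma hfun_zero_outside (s c x : ℝ) (hc : 1 ≤ c) (hx : s^2 - c^2*x^2 ≤ 0) : hfun s c x = 0 := by
  unfold hfun
  rw [show Real.sqrt (s^2 - c^2*x^2) = 0 from Real.sqrt_eq_zero_of_nonpos hx, mul_zero]
  exact min_eq_right (Real.sqrt_nonneg _)

lemma Farc_eval (s a : ℝ) (hs : 0 < s) : Farc s (s*a)
    = (s^2 * Real.arcsin a + s^2 * (a * Real.sqrt (1-a^2)))/2 := by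
  unfold Farc
  rw [mul_comm s a, mul_div_assoc, div_self hs.ne', mul_one,
    show s^2 - (a*s)^2 = s^2*(1-a^2) by ring,
    Real.sqrt_mul (by positivity), Real.sqrt_sq hs.le]
  ring

lemma ftc_ell (s c : ℝ) (hs : 0 < s) (hc0 : 0 < c) {a b : ℝ} (ha : -(s/c) ≤ a) (hab : a ≤ b)
    (hb : b ≤ s/c) :
    ∫ x in a..b, c * Real.sqrt (s^2 - c^2*x^2) = Farc s (c*b) - Farc s (c*a) := by
  have hF : Continuous fun x : ℝ => Farc s (c*x) :=
    (continuous_Farc s).comp (continuous_const.mul continuous_id)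
  apply intervalIntegral.integral_eq_sub_of_hasDeriv_right_of_le hab hF.continuousOn
  · intro x hx
    have hax : -(s/c) < x := lt_of_le_of_lt ha hx.1
    have hbx : x < s/c := lt_of_lt_of_le hx.2 hb
    have h1 : -s < c*x := by
      have := mul_lt_mul_of_pos_left hax hc0
      rwa [show c * -(s/c) = -s by field_simp <;> ring] at this
    have h2 : c*x < s := by
      have := mul_lt_mul_of_pos_left hbx hc0
      rwa [show c * (s/c) = s by field_simp <;> ring] at this
    have hd := (hasDerivAt_Farc s hs h1 h2).comp x ((hasDerivAt_id x).const_mul c)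
    have : HasDerivAt (fun x : ℝ => Farc s (c*x)) (Real.sqrt (s^2 - (c*x)^2) * (c*1)) x := hd
    convert this.hasDerivWithinAt using 1
    rw [mul_pow]
    ring
  · exact (continuous_const.mul (Real.continuous_sqrt.comp (by fun_prop))).intervalIntegrable a b

set_option maxHeartbeats 2000000 in
lemma integral_hfun (s c : ℝ) (hs : 0 < s) (hc : 1 ≤ c) :
    ∫ x, hfun s c x = s^2 * (Real.pi/2 -
      (Real.arcsin (c / Real.sqrt (1+c^2)) - Real.arcsin (1 / Real.sqrt (1+c^2)))) := by
  have hc0 : (0:ℝ) < c := lt_of_lt_of_le one_pos hc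
  set D := Real.sqrt (1+c^2) with hDdef
  have hD2 : D^2 = 1+c^2 := Real.sq_sqrt (by positivity)
  have hD0 : 0 < D := Real.sqrt_pos.2 (by positivity)
  have hD1 : 1 ≤ D := by nlinarith
  have hDc : c ≤ D := by nlinarith
  set X := s/D with hXdef
  set B := s/c with hBdef
  have hX0 : 0 < X := div_pos hs hD0
  have hB0 : 0 < B := div_pos hs hc0
  have hXB : X ≤ B := div_le_div_of_nonneg_left hs.le hc0 hDc
  have hBs : B ≤ s := by
    rw [hBdef, div_le_iff₀ hc0]; nlinarith
  have hXs : X ≤ s := le_trans hXB hBs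
  have hX2 : X^2 * (1+c^2) = s^2 := by
    rw [hXdef, div_pow, hD2]; field_simp
  have hB2 : c^2 * B^2 = s^2 := by rw [hBdef]; field_simp
  have hcsq : (0:ℝ) ≤ c^2 - 1 := by nlinarith
  -- restrict to [-s, s]
  have hind : ∀ x ∉ Icc (-s) s, hfun s c x = 0 := by
    intro x hx
    simp only [mem_Icc, not_and_or, not_le] at hx
    apply hfun_zero_outside s c x hc
    have hx2 : s^2 ≤ x^2 := by
      rcases hx with h | h
      · nlinarith [mul_pos (by linarith : (0:ℝ) < -(x+s)) (by linarith : (0:ℝ) < -(x-s))]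
      · nlinarith [mul_pos (by linarith : (0:ℝ) < x-s) (by linarith : (0:ℝ) < x+s)]
    nlinarith [mul_nonneg hcsq (sq_nonneg x)]
  have h0 : ∫ x, hfun s c x = ∫ x in (-s)..s, hfun s c x := by
    rw [intervalIntegral.integral_of_le (by linarith : -s ≤ s),
      ← integral_Icc_eq_integral_Ioc, ← integral_indicator measurableSet_Icc]
    congr 1
    funext x
    by_cases h : x ∈ Icc (-s) s
    · simp [indicator_of_mem h]
    · simp [indicator_of_notMem h, hind x h]
  have hii : ∀ a b : ℝ, IntervalIntegrable (hfun s c) volume a b :=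
    fun a b => (continuous_hfun s c).intervalIntegrable a b
  -- the five pieces
  have e1 : ∫ x in (-s)..(-B), hfun s c x = 0 := by
    rw [intervalIntegral.integral_congr (g := fun _ => (0:ℝ)) ?_, intervalIntegral.integral_const]
    · simp
    · intro x hx
      rw [uIcc_of_le (by linarith : -s ≤ -B), mem_Icc] at hx
      apply hfun_zero_outside s c x hc
      have hx2 : B^2 ≤ x^2 := by
        nlinarith [mul_nonneg (by linarith [hx.2] : (0:ℝ) ≤ -(x+B)) (by linarith [hx.2] : (0:ℝ) ≤ -(x-B))]
      nlinarith [mul_nonneg (sq_nonneg c) (by linarith : (0:ℝ) ≤ x^2 - B^2)]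
  have e5 : ∫ x in B..s, hfun s c x = 0 := by
    rw [intervalIntegral.integral_congr (g := fun _ => (0:ℝ)) ?_, intervalIntegral.integral_const]
    · simp
    · intro x hx
      rw [uIcc_of_le (by linarith : B ≤ s), mem_Icc] at hx
      apply hfun_zero_outside s c x hc
      have hx2 : B^2 ≤ x^2 := by
        nlinarith [mul_nonneg (by linarith [hx.1] : (0:ℝ) ≤ x-B) (by linarith [hx.1] : (0:ℝ) ≤ x+B)]
      nlinarith [mul_nonneg (sq_nonneg c) (by linarith : (0:ℝ) ≤ x^2 - B^2)]
  have hEqR : ∀ x : ℝ, X ≤ |x| → hfun s c x = c * Real.sqrt (s^2 - c^2*x^2) := by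
    intro x hx
    have hxX : X^2 ≤ x^2 := by
      rw [← sq_abs x]; exact pow_le_pow_left₀ hX0.le hx 2
    have hx2 : s^2 ≤ x^2 * (1+c^2) := by
      have := mul_le_mul_of_nonneg_right hxX (by positivity : (0:ℝ) ≤ 1+c^2)
      linarith [hX2]
    apply min_eq_right
    rw [show c * Real.sqrt (s^2-c^2*x^2) = Real.sqrt (c^2*(s^2-c^2*x^2)) by
      rw [Real.sqrt_mul (by positivity), Real.sqrt_sq hc0.le]]
    apply Real.sqrt_le_sqrt
    nlinarith [mul_nonneg hcsq (by linarith : (0:ℝ) ≤ x^2*(1+c^2) - s^2)]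
  have hEqL : ∀ x : ℝ, |x| ≤ X → hfun s c x = Real.sqrt (s^2 - x^2) := by
    intro x hx
    have hxX : x^2 ≤ X^2 := by
      rw [← sq_abs x]; exact pow_le_pow_left₀ (abs_nonneg x) hx 2
    have hx2 : x^2 * (1+c^2) ≤ s^2 := by
      have := mul_le_mul_of_nonneg_right hxX (by positivity : (0:ℝ) ≤ 1+c^2)
      linarith [hX2]
    apply min_eq_left
    rw [show c * Real.sqrt (s^2-c^2*x^2) = Real.sqrt (c^2*(s^2-c^2*x^2)) by
      rw [Real.sqrt_mul (by positivity), Real.sqrt_sq hc0.le]]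
    apply Real.sqrt_le_sqrt
    nlinarith [mul_nonneg hcsq (by linarith : (0:ℝ) ≤ s^2 - x^2*(1+c^2))]
  have e2 : ∫ x in (-B)..(-X), hfun s c x = Farc s (c * -X) - Farc s (c * -B) := by
    rw [intervalIntegral.integral_congr (g := fun x => c * Real.sqrt (s^2 - c^2*x^2)) ?_]
    · exact ftc_ell s c hs hc0 (le_of_eq (by rw [hBdef])) (by linarith) (by rw [← hBdef]; linarith)
    · intro x hx
      rw [uIcc_of_le (by linarith : -B ≤ -X), mem_Icc] at hx
      exact hEqR x (le_abs.2 (Or.inr (by linarith [hx.2])))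
  have e4 : ∫ x in X..B, hfun s c x = Farc s (c * B) - Farc s (c * X) := by
    rw [intervalIntegral.integral_congr (g := fun x => c * Real.sqrt (s^2 - c^2*x^2)) ?_]
    · exact ftc_ell s c hs hc0 (by rw [← hBdef]; linarith) hXB (le_of_eq (by rw [hBdef]))
    · intro x hx
      rw [uIcc_of_le hXB, mem_Icc] at hx
      exact hEqR x (le_abs.2 (Or.inl hx.1))
  have e3 : ∫ x in (-X)..X, hfun s c x = Farc s X - Farc s (-X) := by
    rw [intervalIntegral.integral_congr (g := fun x => Real.sqrt (s^2 - x^2)) ?_]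
    · exact ftc_circ s hs (by linarith) (by linarith) hXs
    · intro x hx
      rw [uIcc_of_le (by linarith : -X ≤ X), mem_Icc] at hx
      exact hEqL x (abs_le.2 ⟨hx.1, hx.2⟩)
  have htot : ∫ x, hfun s c x = (∫ x in (-s)..(-B), hfun s c x) + (∫ x in (-B)..(-X), hfun s c x)
      + (∫ x in (-X)..X, hfun s c x) + (∫ x in X..B, hfun s c x) + (∫ x in B..s, hfun s c x) := by
    rw [h0, ← intervalIntegral.integral_add_adjacent_intervals (hii (-s) (-B)) (hii (-B) s),
      ← intervalIntegral.integral_add_adjacent_intervals (hii (-B) (-X)) (hii (-X) s),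
      ← intervalIntegral.integral_add_adjacent_intervals (hii (-X) X) (hii X s),
      ← intervalIntegral.integral_add_adjacent_intervals (hii X B) (hii B s)]
    ring
  rw [htot, e1, e2, e3, e4, e5]
  -- evaluate the Farc values
  have hcX : c * X = s * (c/D) := by rw [hXdef]; field_simp <;> ring
  have hcB : c * B = s * 1 := by rw [hBdef]; field_simp <;> ring
  have hXe : X = s * (1/D) := by rw [hXdef]; field_simp <;> ring
  have hs1 : Real.sqrt (1 - (c/D)^2) = 1/D := by
    rw [show 1 - (c/D)^2 = (1/D)^2 by rw [div_pow, div_pow, hD2]; field_simp <;> ring,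
      Real.sqrt_sq (by positivity)]
  have hs2 : Real.sqrt (1 - (1/D)^2) = c/D := by
    rw [show 1 - (1/D)^2 = (c/D)^2 by rw [div_pow, div_pow, hD2]; field_simp <;> ring,
      Real.sqrt_sq (by positivity)]
  have v1 : Farc s (c * X) = (s^2 * Real.arcsin (c/D) + s^2 * ((c/D) * (1/D)))/2 := by
    rw [hcX, Farc_eval s _ hs, hs1]
  have v2 : Farc s (c * -X) = (-(s^2 * Real.arcsin (c/D)) - s^2 * ((c/D) * (1/D)))/2 := by
    rw [show c * -X = s * (-(c/D)) by rw [mul_neg, hcX]; ring, Farc_eval s _ hs,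
      Real.arcsin_neg, show (-(c/D))^2 = (c/D)^2 by ring, hs1]
    ring
  have v3 : Farc s (c * B) = (s^2 * (Real.pi/2))/2 := by
    rw [hcB, Farc_eval s _ hs, Real.arcsin_one]
    norm_num
  have v4 : Farc s (c * -B) = (-(s^2 * (Real.pi/2)))/2 := by
    rw [show c * -B = s * (-1) by rw [mul_neg, hcB]; ring, Farc_eval s _ hs,
      Real.arcsin_neg, Real.arcsin_one]
    norm_num
  have v5 : Farc s X = (s^2 * Real.arcsin (1/D) + s^2 * ((1/D) * (c/D)))/2 := by
    rw [hXe, Farc_eval s _ hs, hs2]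
  have v6 : Farc s (-X) = (-(s^2 * Real.arcsin (1/D)) - s^2 * ((1/D) * (c/D)))/2 := by
    rw [show -X = s * (-(1/D)) by rw [hXe]; ring, Farc_eval s _ hs,
      Real.arcsin_neg, show (-(1/D))^2 = (1/D)^2 by ring, hs2]
    ring
  rw [v1, v2, v3, v4, v5, v6]
  ring

lemma hfun_outside (s c : ℝ) (hc : 1 ≤ c) {x : ℝ} (hx : x ∉ Icc (-s) s) (hs : 0 < s) :
    hfun s c x = 0 := by
  have hc0 : (0:ℝ) < c := lt_of_lt_of_le one_pos hc
  simp only [mem_Icc, not_and_or, not_le] at hx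
  apply hfun_zero_outside s c x hc
  have hx2 : s^2 ≤ x^2 := by
    rcases hx with h | h
    · nlinarith [mul_pos (by linarith : (0:ℝ) < -(x+s)) (by linarith : (0:ℝ) < -(x-s))]
    · nlinarith [mul_pos (by linarith : (0:ℝ) < x-s) (by linarith : (0:ℝ) < x+s)]
  nlinarith [mul_nonneg (by nlinarith : (0:ℝ) ≤ c^2-1) (sq_nonneg x)]

lemma volume_inter (s c : ℝ) (hs : 0 < s) (hc : 1 ≤ c) :
    volume {p : ℝ × ℝ | p.1^2 + p.2^2 ≤ s^2 ∧ c^2 * p.1^2 + (c^2)⁻¹ * p.2^2 ≤ s^2}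
      = ENNReal.ofReal (2 * s^2 * (Real.pi/2 -
        (Real.arcsin (c / Real.sqrt (1+c^2)) - Real.arcsin (1 / Real.sqrt (1+c^2))))) := by
  have hc0 : (0:ℝ) < c := lt_of_lt_of_le one_pos hc
  have hS : MeasurableSet {p : ℝ × ℝ | p.1^2 + p.2^2 ≤ s^2 ∧ c^2 * p.1^2 + (c^2)⁻¹ * p.2^2 ≤ s^2} := by
    have h1 : IsClosed {p : ℝ × ℝ | p.1^2 + p.2^2 ≤ s^2} :=
      isClosed_le (by fun_prop) continuous_const
    have h2 : IsClosed {p : ℝ × ℝ | c^2 * p.1^2 + (c^2)⁻¹ * p.2^2 ≤ s^2} :=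
      isClosed_le (by fun_prop) continuous_const
    exact (h1.inter h2).measurableSet
  rw [show (volume : Measure (ℝ × ℝ)) = (volume : Measure ℝ).prod volume from Measure.volume_eq_prod ℝ ℝ,
    Measure.prod_apply hS]
  have hslice : ∀ x : ℝ, volume (Prod.mk x ⁻¹'
      {p : ℝ × ℝ | p.1^2 + p.2^2 ≤ s^2 ∧ c^2 * p.1^2 + (c^2)⁻¹ * p.2^2 ≤ s^2})
      = ENNReal.ofReal (2 * hfun s c x) := fun x => slice_volume s c hc x
  rw [lintegral_congr hslice]
  have hcs : HasCompactSupport fun x => 2 * hfun s c x := by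
    apply HasCompactSupport.intro (isCompact_Icc (a := -s) (b := s))
    intro x hx
    rw [hfun_outside s c hc hx hs, mul_zero]
  have hint : Integrable fun x => 2 * hfun s c x :=
    (continuous_const.mul (continuous_hfun s c)).integrable_of_hasCompactSupport hcs
  rw [← MeasureTheory.ofReal_integral_eq_lintegral_ofReal hint
    (Filter.Eventually.of_forall fun x => mul_nonneg (by norm_num) (hfun_nonneg s c x hc0.le)),
    MeasureTheory.integral_const_mul, integral_hfun s c hs hc]
  congr 1
  ring

lemma interp_ineq {u v x y s2 : ℝ} (hu : 1 ≤ u) (hv : 1 ≤ v) (hx : 0 ≤ x) (hy : 0 ≤ y)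
    (h1 : x + y ≤ s2) (h2 : (u*v)*x + (u*v)⁻¹*y ≤ s2) : u*x + u⁻¹*y ≤ s2 := by
  have hu0 : (0:ℝ) < u := lt_of_lt_of_le one_pos hu
  have hv0 : (0:ℝ) < v := lt_of_lt_of_le one_pos hv
  have huv : (1:ℝ) ≤ u*v := one_le_mul_of_one_le_of_one_le hu hv
  have h2' : u^2*v^2*x + y ≤ u*v*s2 := by
    have := mul_le_mul_of_nonneg_left h2 (by positivity : (0:ℝ) ≤ u*v)
    have heq : (u*v) * ((u*v)*x + (u*v)⁻¹*y) = u^2*v^2*x + y := by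
      field_simp
    linarith [heq ▸ this]
  have hgoal' : u^2*v*x + v*y ≤ u*v*s2 := by
    rcases eq_or_lt_of_le huv with heq | hlt
    · have hu1 : u = 1 := by nlinarith
      have hv1 : v = 1 := by nlinarith
      rw [hu1, hv1]; ring_nf; linarith
    · have a1 : (0:ℝ) ≤ u^2*v*(v-1)*(s2-x-y) :=
        mul_nonneg (mul_nonneg (mul_nonneg (by positivity) hv0.le) (by linarith)) (by linarith)
      have a2 : (0:ℝ) ≤ (u-1)*(u*v*s2 - u^2*v^2*x - y) :=
        mul_nonneg (by linarith) (by linarith)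
      have a3 : (0:ℝ) ≤ (u-1)*(v-1)*(u*v-1)*y :=
        mul_nonneg (mul_nonneg (mul_nonneg (by linarith) (by linarith)) (by linarith)) hy
      by_contra hG
      push_neg at hG
      have hprod := mul_pos (by linarith : (0:ℝ) < u*v - 1)
        (by linarith : (0:ℝ) < u^2*v*x + v*y - u*v*s2)
      nlinarith [a1, a2, a3, hprod]
  have hfin : u*x + u⁻¹*y = (u^2*v*x + v*y)/(u*v) := by
    field_simp
  rw [hfin, div_le_iff₀ (by positivity)]
  linarith [hgoal']

lemma Uset_eq (lam s : ℝ) (hlam : 1 ≤ lam) (q κ : ℕ) :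
    Uset lam s q κ = ellipseSet lam s q 0 ∩ ellipseSet lam s q κ := by
  apply Subset.antisymm
  · intro p hp
    simp only [Uset, mem_iInter] at hp
    exact ⟨hp 0 (Nat.zero_le _), hp κ le_rfl⟩
  · rintro p ⟨h0, hκ⟩
    simp only [Uset, mem_iInter]
    intro i hi
    simp only [ellipseSet, mem_setOf_eq] at h0 hκ ⊢
    have h0' : p.1^2 + p.2^2 ≤ s^2 := by simpa using h0
    have huv : lam ^ (2*i*q) * lam ^ (2*(κ-i)*q) = lam ^ (2*κ*q) := by
      rw [← pow_add]; congr 1; rw [← add_mul]; congr 1; omega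
    have hu : (1:ℝ) ≤ lam ^ (2*i*q) := one_le_pow₀ hlam
    have hv : (1:ℝ) ≤ lam ^ (2*(κ-i)*q) := one_le_pow₀ hlam
    apply interp_ineq hu hv (sq_nonneg _) (sq_nonneg _) h0'
    rw [huv]
    exact hκ

lemma measurableSet_ellipse (lam s : ℝ) (q i : ℕ) : MeasurableSet (ellipseSet lam s q i) := by
  have h : ellipseSet lam s q i
      = {p : ℝ × ℝ | lam ^ (2*i*q) * p.1 ^ 2 + (lam ^ (2*i*q))⁻¹ * p.2 ^ 2 ≤ s ^ 2} := rfl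
  rw [h]
  exact (isClosed_le (by fun_prop) continuous_const).measurableSet

lemma Uset_volume (lam : ℝ) (hlam : 1 < lam) (q : ℕ) (s : ℝ) (hs : 0 < s) (κ : ℕ) :
    volume (Uset lam s q κ) = ENNReal.ofReal (2 * s^2 * (Real.pi/2 - fArc lam (κ*q))) := by
  have hc : (1:ℝ) ≤ lam^(κ*q) := one_le_pow₀ hlam.le
  have hpow : (lam^(κ*q))^2 = lam^(2*(κ*q)) := by rw [← pow_mul]; congr 1; ring
  rw [Uset_eq lam s hlam.le q κ]
  have hset : ellipseSet lam s q 0 ∩ ellipseSet lam s q κ =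
      {p : ℝ×ℝ | p.1^2 + p.2^2 ≤ s^2 ∧
        (lam^(κ*q))^2 * p.1^2 + ((lam^(κ*q))^2)⁻¹ * p.2^2 ≤ s^2} := by
    ext p
    simp only [ellipseSet, mem_inter_iff, mem_setOf_eq]
    rw [hpow, show 2*(κ*q) = 2*κ*q from by ring]
    constructor
    · rintro ⟨h0, hκ⟩; exact ⟨by simpa using h0, hκ⟩
    · rintro ⟨h0, hκ⟩; exact ⟨by simpa using h0, hκ⟩
  rw [hset, volume_inter s _ hs hc]
  unfold fArc
  rw [← hpow]

lemma fArc_nonneg (lam : ℝ) (hlam : 1 ≤ lam) (t : ℕ) : 0 ≤ fArc lam t := by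
  unfold fArc
  have h1 : (1:ℝ) ≤ lam^t := one_le_pow₀ hlam
  have hsq : (0:ℝ) < Real.sqrt (1 + lam^(2*t)) := Real.sqrt_pos.2 (by positivity)
  have hle : (1:ℝ) / Real.sqrt (1 + lam^(2*t)) ≤ lam^t / Real.sqrt (1 + lam^(2*t)) := by
    gcongr
  exact sub_nonneg.2 (Real.monotone_arcsin hle)

lemma fArc_le (lam : ℝ) (hlam : 1 ≤ lam) (t : ℕ) : fArc lam t ≤ Real.pi/2 := by
  unfold fArc
  have hsq : (0:ℝ) < Real.sqrt (1 + lam^(2*t)) := Real.sqrt_pos.2 (by positivity)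
  have h2 : 0 ≤ Real.arcsin (1 / Real.sqrt (1 + lam^(2*t))) :=
    Real.arcsin_nonneg.2 (by positivity)
  linarith [Real.arcsin_le_pi_div_two (lam^t / Real.sqrt (1 + lam^(2*t)))]

lemma fArc_mono (lam : ℝ) (hlam : 1 ≤ lam) {t₁ t₂ : ℕ} (h : t₁ ≤ t₂) :
    fArc lam t₁ ≤ fArc lam t₂ := by
  unfold fArc
  set u₁ := lam^t₁ with hu₁
  set u₂ := lam^t₂ with hu₂
  have h1 : (1:ℝ) ≤ u₁ := one_le_pow₀ hlam
  have h2 : (1:ℝ) ≤ u₂ := one_le_pow₀ hlam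
  have h12 : u₁ ≤ u₂ := pow_le_pow_right₀ hlam h
  have hp1 : lam^(2*t₁) = u₁^2 := by rw [hu₁, ← pow_mul]; congr 1; ring
  have hp2 : lam^(2*t₂) = u₂^2 := by rw [hu₂, ← pow_mul]; congr 1; ring
  rw [hp1, hp2]
  have hs1 : (0:ℝ) < Real.sqrt (1 + u₁^2) := Real.sqrt_pos.2 (by positivity)
  have hs2 : (0:ℝ) < Real.sqrt (1 + u₂^2) := Real.sqrt_pos.2 (by positivity)
  have ha : u₁ / Real.sqrt (1 + u₁^2) ≤ u₂ / Real.sqrt (1 + u₂^2) := by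
    rw [div_le_div_iff₀ hs1 hs2,
      show u₁ * Real.sqrt (1 + u₂^2) = Real.sqrt (u₁^2 * (1 + u₂^2)) by
        rw [Real.sqrt_mul (sq_nonneg u₁), Real.sqrt_sq (by linarith)],
      show u₂ * Real.sqrt (1 + u₁^2) = Real.sqrt (u₂^2 * (1 + u₁^2)) by
        rw [Real.sqrt_mul (sq_nonneg u₂), Real.sqrt_sq (by linarith)]]
    apply Real.sqrt_le_sqrt
    nlinarith
  have hb : 1 / Real.sqrt (1 + u₂^2) ≤ 1 / Real.sqrt (1 + u₁^2) := by
    apply one_div_le_one_div_of_le hs1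
    apply Real.sqrt_le_sqrt
    nlinarith
  have := Real.monotone_arcsin ha
  have := Real.monotone_arcsin hb
  linarith

lemma Qset_volume (lam : ℝ) (hlam : 1 < lam) (q : ℕ) (s : ℝ) (hs : 0 < s) (κ : ℕ) :
    volume (Qset lam s q κ)
      = ENNReal.ofReal (2 * s^2 * (fArc lam ((κ+1)*q) - fArc lam (κ*q))) := by
  have hAll : Uset lam s q (κ+1) = Uset lam s q κ ∩ ellipseSet lam s q (κ+1) :=
    Set.biInter_le_succ _ κ
  have hUm : ∀ n : ℕ, MeasurableSet (Uset lam s q n) := fun n =>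
    MeasurableSet.biInter (to_countable _) fun i _ => measurableSet_ellipse lam s q i
  have hfin : volume (Uset lam s q (κ+1)) ≠ ⊤ := by
    rw [Uset_volume lam hlam q s hs]
    exact ENNReal.ofReal_ne_top
  have hsub : Uset lam s q (κ+1) ⊆ Uset lam s q κ := by
    rw [hAll]; exact inter_subset_left
  have hQ : Qset lam s q κ = Uset lam s q κ \ Uset lam s q (κ+1) := by
    unfold Qset
    rw [hAll, diff_self_inter]
  rw [hQ, measure_diff hsub (hUm (κ+1)).nullMeasurableSet hfin,
    Uset_volume lam hlam q s hs, Uset_volume lam hlam q s hs,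
    ← ENNReal.ofReal_sub _ (by
      have := fArc_le lam hlam.le ((κ+1)*q)
      have hss : (0:ℝ) ≤ 2 * s^2 := by positivity
      exact mul_nonneg hss (by linarith))]
  congr 1
  ring

lemma fArc_zero (lam : ℝ) : fArc lam 0 = 0 := by
  unfold fArc
  norm_num

/-- for every `κ ≥ 1`,
`(Leb₂(Q^{κ-1}) − Leb₂(Q^κ))/Leb₂(Q⁰) = (2f(κq) − f((κ−1)q) − f((κ+1)q))/f(q)`,
the multiplicity distribution of the limiting compound Poisson process for the
Euclidean metric. -/
theorem multiplicity_distribution_formula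
    (lam : ℝ) (hlam : 1 < lam) (q : ℕ) (hq : 1 ≤ q) (s : ℝ) (hs : 0 < s) :
    ∀ κ : ℕ, 1 ≤ κ →
      ((volume (Qset lam s q (κ - 1))).toReal - (volume (Qset lam s q κ)).toReal) /
          (volume (Qset lam s q 0)).toReal =
        (2 * fArc lam (κ * q) - fArc lam ((κ - 1) * q) - fArc lam ((κ + 1) * q)) /
          fArc lam q := by
  intro κ hκ
  obtain ⟨j, rfl⟩ : ∃ j, κ = j + 1 := ⟨κ - 1, (Nat.succ_pred_eq_of_pos hκ).symm⟩
  have hmono : ∀ m n : ℕ, m ≤ n → fArc lam (m*q) ≤ fArc lam (n*q) := fun m n h =>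
    fArc_mono lam hlam.le (Nat.mul_le_mul_right q h)
  have hQvol : ∀ n : ℕ, (volume (Qset lam s q n)).toReal
      = 2 * s^2 * (fArc lam ((n+1)*q) - fArc lam (n*q)) := by
    intro n
    rw [Qset_volume lam hlam q s hs n, ENNReal.toReal_ofReal]
    exact mul_nonneg (by positivity) (by linarith [hmono n (n+1) (Nat.le_succ n)])
  have h10 : (j + 1 - 1 : ℕ) = j := by omega
  rw [h10, hQvol, hQvol, hQvol]
  rw [show (0+1)*q = 1*q from by norm_num, one_mul, show (0:ℕ)*q = 0 from by ring, fArc_zero]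
  rw [show 2 * s^2 * (fArc lam ((j+1)*q) - fArc lam (j*q))
        - 2 * s^2 * (fArc lam ((j+1+1)*q) - fArc lam ((j+1)*q))
      = (2*s^2) * (2 * fArc lam ((j+1)*q) - fArc lam (j*q) - fArc lam ((j+1+1)*q)) from by ring,
    show 2 * s^2 * (fArc lam q - 0) = (2*s^2) * fArc lam q from by ring,
    mul_div_mul_left _ _ (by positivity : (2:ℝ)*s^2 ≠ 0)]
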